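/- arXiv:2202.10390 — 6 statements merged into one kernel-verified Lean document; each statement's English description precedes it below -/
import Mathlib

section
/- Let E be a binary relation on V and define F(TC)(x,y) := (x = y) ∨ ∃ z, E(x,z) ∧ TC(z,y). Let φ(TC) := ∀ x y, (∃ z, E(x,z) ∧ TC(z,y)) ↔ (∃ z, TC(x,z) ∧ E(z,y)). Then φ is a loop invariant for F: φ holds for the empty relation, and φ(TC) implies φ(F(TC)). -/
theorem beyond_magic_invariant {V : Type*} (E : V → V → Prop)
    (F : (V → V → Prop) → V → V → Prop)
    (hF : F = fun TC x y => x = y ∨ ∃ z, E x z ∧ TC z y)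
    (φ : (V → V → Prop) → Prop)
    (hφ : φ = fun TC => ∀ x y, (∃ z, E x z ∧ TC z y) ↔ (∃ z, TC x z ∧ E z y)) :
    φ (fun _ _ => False) ∧ ∀ TC, φ TC → φ (F TC) := by
  subst hF hφ
  constructor
  · simp
  · intro TC h x y
    constructor
    · rintro ⟨z, hxz, rfl | ⟨w, hzw, hwy⟩⟩
      · exact ⟨x, Or.inl rfl, hxz⟩
      · obtain ⟨u, hzu, huy⟩ := (h z y).mp ⟨w, hzw, hwy⟩
        exact ⟨u, Or.inr ⟨z, hxz, hzu⟩, huy⟩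
    · rintro ⟨z, rfl | ⟨w, hxw, hwz⟩, hzy⟩
      · exact ⟨y, hzy, Or.inl rfl⟩
      · obtain ⟨u, hwu, huy⟩ := (h w y).mpr ⟨z, hwz, hzy⟩
        exact ⟨w, hxw, Or.inr ⟨u, hwu, huy⟩⟩
end

section
/- Let E be a binary relation on V, a : V, F(TC)(x,y) := (x = y) ∨ ∃ z, E(x,z) ∧ TC(z,y), G(TC)(y) := TC(a,y), and H(Q)(y) := (y = a) ∨ ∃ z, Q(z) ∧ E(z,y). If TC satisfies the invariant ∀ x y, (∃ z, E(x,z) ∧ TC(z,y)) ↔ (∃ z, TC(x,z) ∧ E(z,y)), then G(F(TC)) = H(G(TC)). -/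
theorem beyond_magic_conditional_fgh {V : Type*} (E : V → V → Prop) (a : V)
    (F : (V → V → Prop) → V → V → Prop)
    (G : (V → V → Prop) → V → Prop)
    (H : (V → Prop) → V → Prop)
    (hF : F = fun TC x y => x = y ∨ ∃ z, E x z ∧ TC z y)
    (hG : G = fun TC y => TC a y)
    (hH : H = fun Q y => y = a ∨ ∃ z, Q z ∧ E z y)
    (TC : V → V → Prop)
    (hinv : ∀ x y, (∃ z, E x z ∧ TC z y) ↔ (∃ z, TC x z ∧ E z y)) :
    G (F TC) = H (G TC) := by
  subst hF hG hH
  funext y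
  simp only [eq_iff_iff]
  constructor
  · rintro (h | h)
    · exact Or.inl h.symm
    · exact Or.inr ((hinv a y).mp h)
  · rintro (h | h)
    · exact Or.inl h.symm
    · exact Or.inr ((hinv a y).mpr h)
end

section
/- Combining the previous two facts: with F, G, H as in the beyond-magic example, for every n we have G(F^[n](∅)) = H^[n](G(∅)), where ∅ denotes the empty relation/set. Hence the unoptimized right-recursive program and the optimized reachability program compute the same answer at every iteration. -/
private lemma bm_key {V : Type*} (E : V → V → Prop) :
    ∀ n x y, (fun TC x y => x = y ∨ ∃ z, E x z ∧ TC z y)^[n + 1] (fun _ _ => False) x y ↔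
      (x = y ∨ ∃ z, (fun TC x y => x = y ∨ ∃ z, E x z ∧ TC z y)^[n] (fun _ _ => False) x z ∧ E z y) := by
  intro n
  induction n with
  | zero => intro x y; simp
  | succ n ih =>
    intro x y
    rw [Function.iterate_succ_apply']
    show (x = y ∨ ∃ z, E x z ∧ _) ↔ _
    constructor
    · rintro (h | ⟨z, hz, hzy⟩)
      · exact Or.inl h
      · rcases (ih z y).1 hzy with h | ⟨w, hw, hwy⟩
        · refine Or.inr ⟨x, ?_, h ▸ hz⟩
          rw [Function.iterate_succ_apply']
          exact Or.inl rfl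
        · refine Or.inr ⟨w, ?_, hwy⟩
          rw [Function.iterate_succ_apply']
          exact Or.inr ⟨z, hz, hw⟩
    · rintro (h | ⟨w, hw, hwy⟩)
      · exact Or.inl h
      · rw [Function.iterate_succ_apply'] at hw
        rcases hw with h | ⟨z, hz, hzw⟩
        · subst h
          exact Or.inr ⟨y, hwy, (ih y y).2 (Or.inl rfl)⟩
        · exact Or.inr ⟨z, hz, (ih z y).2 (Or.inr ⟨w, hzw, hwy⟩)⟩

theorem beyond_magic_correct {V : Type*} (E : V → V → Prop) (a : V)
    (F : (V → V → Prop) → V → V → Prop)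
    (G : (V → V → Prop) → V → Prop)
    (H : (V → Prop) → V → Prop)
    (hF : F = fun TC x y => x = y ∨ ∃ z, E x z ∧ TC z y)
    (hG : G = fun TC y => TC a y)
    (hH : H = fun Q y => y = a ∨ ∃ z, Q z ∧ E z y)
    (n : ℕ) :
    G (F^[n] (fun _ _ => False)) = H^[n] (G (fun _ _ => False)) := by
  subst hF hG hH
  induction n with
  | zero => rfl
  | succ n ih =>
    funext y
    apply propext
    apply Iff.trans (bm_key E n a y)
    rw [Function.iterate_succ_apply']
    constructor
    · rintro (h | ⟨z, hz, hzy⟩)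
      · exact Or.inl h.symm
      · exact Or.inr ⟨z, cast (congrFun ih z) hz, hzy⟩
    · rintro (h | ⟨z, hz, hzy⟩)
      · exact Or.inl h.symm
      · exact Or.inr ⟨z, cast (congrFun ih z).symm hz, hzy⟩
end

section
/- Generalized semi-naive evaluation is correct: let S be a complete distributive lattice, F : S → S monotone, and define b ⊖ a := ⨅ {c | b ≤ a ⊕ c}. Define sequences X₀ = ⊥, X_{t+1} = F(X_t) for the naive program, and Y₀ = ⊥, Δ₀ = F(⊥), Y_{t+1} = Y_t ⊕ Δ_t, Δ_{t+1} = F(Y_{t+1}) ⊖ Y_{t+1} for the semi-naive program. Then for all t, Y_{t+1} = X_{t+1} (equivalently, defining G(X) := (X, F(X) ⊖ X) and H(X,Δ) := (X ⊕ Δ, F(X ⊕ Δ) ⊖ (X ⊕ Δ)), one has G(F(X)) = H(G(X)) for all X in the inflationary chain). -/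
lemma sup_ominus {S : Type*} [CompletelyDistribLattice S] (a b : S) :
    a ⊔ sInf {c | b ≤ a ⊔ c} = a ⊔ b := by
  rw [sup_sInf_eq]
  apply le_antisymm
  · exact iInf_le_of_le b (iInf_le_of_le le_sup_right le_rfl)
  · exact le_iInf₂ fun c hc => sup_le le_sup_left hc

theorem seminaive_correct {S : Type*} [CompletelyDistribLattice S]
    (F : S → S) (hF : Monotone F)
    (X Y Δ : ℕ → S)
    (hX0 : X 0 = ⊥) (hX : ∀ t, X (t + 1) = F (X t))
    (hY0 : Y 0 = ⊥) (hΔ0 : Δ 0 = F ⊥)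
    (hY : ∀ t, Y (t + 1) = Y t ⊔ Δ t)
    (hΔ : ∀ t, Δ (t + 1) = sInf {c | F (Y (t + 1)) ≤ Y (t + 1) ⊔ c}) :
    ∀ t, Y (t + 1) = X (t + 1) := by
  have hmono : ∀ t, X t ≤ X (t + 1) := by
    intro t
    induction t with
    | zero => rw [hX0]; exact bot_le
    | succ n ih => rw [hX, hX]; exact hF ih
  intro t
  induction t with
  | zero => rw [hY 0, hY0, hΔ0, hX 0, hX0, bot_sup_eq]
  | succ n ih =>
    rw [hY (n + 1), hΔ n, sup_ominus, ih, ← hX (n + 1),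
      sup_eq_right.mpr (hmono (n + 1))]
end

section
/- Connected components FGH verification: let E be a symmetric-or-arbitrary binary relation on V, L : V → ℕ∞ a labeling, F(TC)(x,y) := (x = y) ∨ ∃ z, E(x,z) ∧ TC(z,y), G(TC)(x) := ⨅ {L(y) | TC(x,y)} (infimum in ℕ∞), and H(CC)(x) := min(L(x), ⨅ {CC(y) | E(x,y)}). Then for every binary relation TC, G(F(TC)) = H(G(TC)). -/
theorem connected_components_fgh {V : Type*} (E : V → V → Prop) (L : V → ℕ∞)
    (F : (V → V → Prop) → V → V → Prop)
    (G : (V → V → Prop) → V → ℕ∞)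
    (H : (V → ℕ∞) → V → ℕ∞)
    (hF : F = fun TC x y => x = y ∨ ∃ z, E x z ∧ TC z y)
    (hG : G = fun TC x => ⨅ (y) (_ : TC x y), L y)
    (hH : H = fun CC x => min (L x) (⨅ (y) (_ : E x y), CC y)) :
    ∀ TC : V → V → Prop, G (F TC) = H (G TC) := by
  subst hF hG hH
  intro TC
  funext x
  apply le_antisymm
  · apply le_min
    · exact iInf₂_le x (Or.inl rfl)
    · simp only [le_iInf_iff]
      intro z hz y hy
      exact iInf₂_le y (Or.inr ⟨z, hz, hy⟩)
  · simp only [le_iInf_iff]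
    rintro y (rfl | ⟨z, hz, hy⟩)
    · exact min_le_left _ _
    · exact le_trans (min_le_right _ _) (le_trans (iInf₂_le z hz) (iInf₂_le y hy))
end

section
/- Stratification correctness: let K : α → α and F : α × β → β be monotone (ω-continuous) operators on complete lattices α, β, and let L(z, x) := (K(z), F(z, x)). Then lfp(L) = (lfp(K), lfp(λ x, F(lfp(K), x))), i.e., the least fixpoint of the combined operator equals the pair consisting of the least fixpoint of K and the least fixpoint of F with first argument frozen at lfp(K). -/
theorem stratification_correct {α β : Type*} [CompleteLattice α] [CompleteLattice β]
    (K : α →o α) (F : α × β →o β) :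
    OrderHom.lfp
      (⟨fun p => (K p.1, F p), fun p q h => ⟨K.mono h.1, F.mono h⟩⟩ :
        α × β →o α × β)
      = (OrderHom.lfp K,
         OrderHom.lfp ⟨fun x => F (OrderHom.lfp K, x),
           fun x y h => F.mono ⟨le_refl _, h⟩⟩) := by
  set L : α × β →o α × β :=
    ⟨fun p => (K p.1, F p), fun p q h => ⟨K.mono h.1, F.mono h⟩⟩ with hL
  set G : β →o β :=
    ⟨fun x => F (OrderHom.lfp K, x), fun x y h => F.mono ⟨le_refl _, h⟩⟩ with hG
  have hKfix : K (OrderHom.lfp K) = OrderHom.lfp K := OrderHom.map_lfp K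
  have hGfix : G (OrderHom.lfp G) = OrderHom.lfp G := OrderHom.map_lfp G
  have hLfix : L (OrderHom.lfp L) = OrderHom.lfp L := OrderHom.map_lfp L
  apply le_antisymm
  · apply OrderHom.lfp_le
    show (K (OrderHom.lfp K), F (OrderHom.lfp K, OrderHom.lfp G)) ≤ _
    rw [hKfix]
    exact ⟨le_refl _, le_of_eq hGfix⟩
  · have h1 : OrderHom.lfp K ≤ (OrderHom.lfp L).1 := by
      apply OrderHom.lfp_le
      exact le_of_eq (congrArg Prod.fst hLfix)
    have h2 : OrderHom.lfp G ≤ (OrderHom.lfp L).2 := by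
      apply OrderHom.lfp_le
      calc G (OrderHom.lfp L).2 = F (OrderHom.lfp K, (OrderHom.lfp L).2) := rfl
        _ ≤ F ((OrderHom.lfp L).1, (OrderHom.lfp L).2) := F.mono ⟨h1, le_refl _⟩
        _ = (OrderHom.lfp L).2 := congrArg Prod.snd hLfix
    exact ⟨h1, h2⟩
end
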